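/- An R-module M is flat if and only if every map C → M from a finitely presented module C factors through some finitely generated free R-module F. -/

import Mathlib

universe u

/-- **Lazard's criterion**: a module `M` over a ring `R` is flat if and only if every map
`C → M` from a finitely presented module `C` factors through some finitely generated free
`R`-module `F`. -/
theorem lazard_flat_iff_factors_through_finite_free
    (R : Type u) [CommRing R] (M : Type u) [AddCommGroup M] [Module R M] :
    Module.Flat R M ↔
      ∀ (C : Type u) [AddCommGroup C] [Module R C], Module.FinitePresentation R C →
        ∀ f : C →ₗ[R] M,
          ∃ (F : Type u) (_ : AddCommGroup F) (_ : Module R F),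
            Module.Free R F ∧ Module.Finite R F ∧
              ∃ (g : C →ₗ[R] F) (h : F →ₗ[R] M), h.comp g = f := by
  constructor
  · intro hflat C _ _ hfp f
    obtain ⟨κ, h₂, h₃, hfac⟩ := Module.Flat.exists_factorization_of_isFinitelyPresented f
    exact ⟨Fin κ →₀ R, inferInstance, inferInstance, inferInstance, inferInstance,
      h₂, h₃, hfac.symm⟩
  · intro H
    apply Module.Flat.of_forall_exists_factorization
    intro ι f x hxf
    -- C := (ι →₀ R) / span {f}
    set K : Submodule R (Fin ι →₀ R) := Submodule.span R {f} with hK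
    have hfp : Module.FinitePresentation R ((Fin ι →₀ R) ⧸ K) := by
      apply Module.finitePresentation_of_surjective K.mkQ (Submodule.mkQ_surjective K)
      rw [Submodule.ker_mkQ]
      exact Submodule.fg_span (Set.finite_singleton f)
    have hxK : K ≤ LinearMap.ker x := by
      rw [hK, Submodule.span_le, Set.singleton_subset_iff]
      exact hxf
    obtain ⟨F, _, _, hfree, hfin, g, h, hgh⟩ := H _ hfp (K.liftQ x hxK)
    let b := Module.Free.chooseBasis R F
    let e : F ≃ₗ[R] (Fin (Fintype.card (Module.Free.ChooseBasisIndex R F)) →₀ R) :=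
      (b.reindex (Fintype.equivFin _)).repr
    refine ⟨Fintype.card (Module.Free.ChooseBasisIndex R F),
      (e.toLinearMap ∘ₗ g) ∘ₗ K.mkQ, h ∘ₗ e.symm.toLinearMap, ?_, ?_⟩
    · ext v
      simp only [LinearMap.comp_apply, LinearEquiv.coe_coe, LinearEquiv.symm_apply_apply]
      rw [show h (g (K.mkQ _)) = (h ∘ₗ g) (K.mkQ _) from rfl, hgh]
      simp
    · have : K.mkQ f = 0 := by
        simp [hK, Submodule.mkQ_apply, Submodule.Quotient.mk_eq_zero,
          Submodule.mem_span_singleton_self]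
      simp [LinearMap.comp_apply, this]
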